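/- arXiv:1702.05217 — 5 statements merged into one kernel-verified Lean document; each statement's English description precedes it below -/
import Mathlib

section
/- Let Q be a positive integer, and consider items with profits p_k = w_k = s_k for positive integers s_1, …, s_m with total weight capacity W = Q, v_max = 2, v_min = 1, ν = (v_max - v_min)/W, and R = Q. Then a binary vector x ∈ {0,1}^m satisfies ∑_k s_k x_k ≤ Q and ∑_k p_k x_k - R/(v_max - ν·∑_k w_k x_k) ≥ 0 if and only if ∑_k s_k x_k = Q. -/
/-- Correctness of the capacity-constrained subset-sum reduction: with
`p_k = w_k = s_k`, `W = Q`, `v_max = 2`, `v_min = 1`, `ν = (v_max - v_min)/W = 1/Q`,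
`R = Q`, a binary vector `x` satisfies `∑ s_k x_k ≤ Q` and
`∑ p_k x_k - R/(v_max - ν·∑ w_k x_k) ≥ 0` iff `∑ s_k x_k = Q`. -/
theorem subsetSum_reduction_constrained (m : ℕ) (s : Fin m → ℕ) (hs : ∀ k, 0 < s k)
    (Q : ℕ) (hQ : 0 < Q) (x : Fin m → ℝ) (hx : ∀ k, x k = 0 ∨ x k = 1) :
    ((∑ k, (s k : ℝ) * x k) ≤ (Q : ℝ) ∧
      0 ≤ (∑ k, (s k : ℝ) * x k) -
        (Q : ℝ) / (2 - (1 / (Q : ℝ)) * ∑ k, (s k : ℝ) * x k)) ↔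
    (∑ k, (s k : ℝ) * x k) = (Q : ℝ) := by
  set S := ∑ k, (s k : ℝ) * x k with hS
  have hQR : (0:ℝ) < Q := by exact_mod_cast hQ
  constructor
  · rintro ⟨h1, h2⟩
    have hd : 0 < 2 - (1 / (Q:ℝ)) * S := by
      have : (1 / (Q:ℝ)) * S ≤ 1 := by
        rw [one_div, inv_mul_le_iff₀ hQR]
        linarith
      linarith
    rw [sub_nonneg, div_le_iff₀ hd] at h2
    have hne : (Q:ℝ) ≠ 0 := ne_of_gt hQR
    have key : S * (2 - 1 / (Q:ℝ) * S) = (2 * S * Q - S ^ 2) / Q := by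
      field_simp
    rw [key, le_div_iff₀ hQR] at h2
    nlinarith [sq_nonneg (S - Q)]
  · intro h
    rw [h]
    have hne : (Q:ℝ) ≠ 0 := ne_of_gt hQR
    constructor
    · exact le_refl _
    · rw [one_div, inv_mul_cancel₀ hne]; norm_num
end

section
/- Let β be defined recursively by: for the first item e_{ij} in the lexicographic order, β(i,j,0) = B(∅), β(i,j,w_{ij}) = B(e_{ij}), and β(i,j,k) = -∞ otherwise; and for each subsequent item e_{ij} with predecessor e_{i'j'}, β(i,j,k) = max{ β(i',j',k), β(i',j',k - w_{ij}) + p_{ij} - R·d_{in}·(1/(v_max - ν k) - 1/(v_max - ν(k - w_{ij}))) }. Then β(i,j,k) equals the maximum benefit B(x) over all selections x supported on items e_{ab} ⪯ e_{ij} with total weight exactly k (and -∞ if no such selection exists). -/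
/-- Weight carried on edge `i` (from city `i` to `i+1`) when the items in `S`
(item `j` located at city `c j`) are selected. -/
noncomputable def pwtLoad (w : ℕ → ℝ) (c : ℕ → ℕ) (S : Finset ℕ) (i : ℕ) : ℝ :=
  ∑ j ∈ S.filter (fun j => c j ≤ i), w j

/-- Total travel time of the vehicle along the `n` edges with distances `d`,
carrying the items of `S`. -/
noncomputable def pwtT (n : ℕ) (d w : ℕ → ℝ) (c : ℕ → ℕ) (vmax ν : ℝ) (S : Finset ℕ) : ℝ :=
  ∑ i ∈ Finset.range n, d i / (vmax - ν * pwtLoad w c S i)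

/-- PWT benefit `B(x) = P(x) - R·T(x)` of the selection `S`. -/
noncomputable def pwtB (n : ℕ) (d p w : ℕ → ℝ) (c : ℕ → ℕ) (vmax ν R : ℝ)
    (S : Finset ℕ) : ℝ :=
  (∑ j ∈ S, p j) - R * pwtT n d w c vmax ν S

lemma pwtB_insert (n : ℕ) (d p w : ℕ → ℝ) (c : ℕ → ℕ) (vmax ν R : ℝ)
    (a : ℕ) (S' : Finset ℕ) (ha : a ∉ S') (hmaxc : ∀ j ∈ S', c j ≤ c a)
    (hcn : c a ≤ n) :
    pwtB n d p w c vmax ν R (insert a S') =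
      pwtB n d p w c vmax ν R S' +
        (p a - R * (∑ l ∈ Finset.Ico (c a) n, d l) *
          (1 / (vmax - ν * (∑ j ∈ insert a S', w j)) -
           1 / (vmax - ν * ((∑ j ∈ insert a S', w j) - w a)))) := by
  have hK : (∑ j ∈ insert a S', w j) = w a + ∑ j ∈ S', w j := Finset.sum_insert ha
  have hload1 : ∀ i < c a, pwtLoad w c (insert a S') i = pwtLoad w c S' i := by
    intro i hi
    unfold pwtLoad
    rw [Finset.filter_insert, if_neg (by omega)]
  have hload2 : ∀ i, c a ≤ i → pwtLoad w c (insert a S') i = ∑ j ∈ insert a S', w j := by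
    intro i hi
    unfold pwtLoad
    congr 1
    apply Finset.filter_true_of_mem
    intro j hj
    rcases Finset.mem_insert.1 hj with rfl | hj
    · exact hi
    · exact le_trans (hmaxc j hj) hi
  have hload3 : ∀ i, c a ≤ i → pwtLoad w c S' i = (∑ j ∈ insert a S', w j) - w a := by
    intro i hi
    unfold pwtLoad
    rw [Finset.filter_true_of_mem (fun j hj => le_trans (hmaxc j hj) hi), hK]
    ring
  have hsplit : ∀ S : Finset ℕ, pwtT n d w c vmax ν S =
      (∑ i ∈ Finset.Ico 0 (c a), d i / (vmax - ν * pwtLoad w c S i)) +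
      (∑ i ∈ Finset.Ico (c a) n, d i / (vmax - ν * pwtLoad w c S i)) := by
    intro S
    unfold pwtT
    rw [Finset.range_eq_Ico, ← Finset.sum_Ico_consecutive _ (Nat.zero_le _) hcn]
  have e1 : (∑ i ∈ Finset.Ico 0 (c a), d i / (vmax - ν * pwtLoad w c (insert a S') i))
      = ∑ i ∈ Finset.Ico 0 (c a), d i / (vmax - ν * pwtLoad w c S' i) :=
    Finset.sum_congr rfl fun i hi => by rw [hload1 i (Finset.mem_Ico.1 hi).2]
  have e2 : (∑ i ∈ Finset.Ico (c a) n, d i / (vmax - ν * pwtLoad w c (insert a S') i))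
      = (∑ l ∈ Finset.Ico (c a) n, d l) * (1 / (vmax - ν * (∑ j ∈ insert a S', w j))) := by
    rw [Finset.sum_mul]
    refine Finset.sum_congr rfl fun i hi => ?_
    rw [hload2 i (Finset.mem_Ico.1 hi).1, mul_one_div]
  have e3 : (∑ i ∈ Finset.Ico (c a) n, d i / (vmax - ν * pwtLoad w c S' i))
      = (∑ l ∈ Finset.Ico (c a) n, d l) *
          (1 / (vmax - ν * ((∑ j ∈ insert a S', w j) - w a))) := by
    rw [Finset.sum_mul]
    refine Finset.sum_congr rfl fun i hi => ?_
    rw [hload3 i (Finset.mem_Ico.1 hi).1, mul_one_div]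
  unfold pwtB
  rw [Finset.sum_insert ha, hsplit, hsplit, e1, e2, e3]
  ring

/-- Correctness of the dynamic program (Theorem 1): items `0, 1, …, m-1` are
processed in route (lexicographic) order, i.e. their city indices `c` are
nondecreasing.  If `β` satisfies the DP recursion — base case
`β 0 0 = B(∅)`, `β 0 (w 0) = B({0})`, `β 0 k = -∞` otherwise, and step
`β (t+1) k = max { β t k,
  β t (k - w(t+1)) + p(t+1) - R·d_in·(1/(v_max - νk) - 1/(v_max - ν(k - w(t+1)))) }`
where `d_in = ∑_{l=c(t+1)}^{n-1} d l` — then `β t k` equals the maximum benefit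
`B(x)` over all selections supported on the first `t+1` items with total weight
exactly `k` (and `-∞` if no such selection exists). -/
theorem pwt_dynamic_programming_correct (n m : ℕ) (hm : 0 < m)
    (d p w : ℕ → ℝ) (c : ℕ → ℕ) (hmono : Monotone c) (hc : ∀ j < m, c j < n)
    (hd : ∀ i < n, 0 < d i) (hp : ∀ j < m, 0 < p j) (hw : ∀ j < m, 0 < w j)
    (vmax ν R : ℝ) (hvmax : 0 < vmax) (hν : 0 < ν) (hR : 0 < R)
    (hcap : ν * (∑ j ∈ Finset.range m, w j) < vmax)
    (β : ℕ → ℝ → EReal)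
    (hbase : ∀ k : ℝ, β 0 k =
      if k = 0 then ((pwtB n d p w c vmax ν R ∅ : ℝ) : EReal)
      else if k = w 0 then ((pwtB n d p w c vmax ν R {0} : ℝ) : EReal)
      else ⊥)
    (hstep : ∀ t : ℕ, t + 1 < m → ∀ k : ℝ,
      β (t + 1) k = max (β t k)
        (β t (k - w (t + 1)) +
          ((p (t + 1) - R * (∑ l ∈ Finset.Ico (c (t + 1)) n, d l) *
            (1 / (vmax - ν * k) - 1 / (vmax - ν * (k - w (t + 1))))) : ℝ))) :
    ∀ t < m, ∀ k : ℝ,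
      β t k = sSup {b : EReal | ∃ S : Finset ℕ, S ⊆ Finset.range (t + 1) ∧
        (∑ j ∈ S, w j) = k ∧ b = ((pwtB n d p w c vmax ν R S : ℝ) : EReal)} := by
  intro t
  induction t with
  | zero =>
    intro _ k
    rw [hbase k]
    have hw0 : 0 < w 0 := hw 0 hm
    have hdescr : ∀ S : Finset ℕ, S ⊆ Finset.range 1 → S = ∅ ∨ S = {0} := by
      intro S hS
      simpa [Finset.range_one, Finset.subset_singleton_iff] using hS
    by_cases hk0 : k = 0
    · rw [if_pos hk0]
      have : {b : EReal | ∃ S : Finset ℕ, S ⊆ Finset.range 1 ∧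
          (∑ j ∈ S, w j) = k ∧ b = ((pwtB n d p w c vmax ν R S : ℝ) : EReal)}
          = {((pwtB n d p w c vmax ν R ∅ : ℝ) : EReal)} := by
        ext b
        constructor
        · rintro ⟨S, hS, hwS, rfl⟩
          rcases hdescr S hS with rfl | rfl
          · simp
          · simp only [Finset.sum_singleton] at hwS
            exact absurd (hwS.trans hk0) hw0.ne'
        · rintro rfl
          exact ⟨∅, by simp [hk0]⟩
      rw [this, sSup_singleton]
    · rw [if_neg hk0]
      by_cases hkw : k = w 0
      · rw [if_pos hkw]
        have : {b : EReal | ∃ S : Finset ℕ, S ⊆ Finset.range 1 ∧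
            (∑ j ∈ S, w j) = k ∧ b = ((pwtB n d p w c vmax ν R S : ℝ) : EReal)}
            = {((pwtB n d p w c vmax ν R {0} : ℝ) : EReal)} := by
          ext b
          constructor
          · rintro ⟨S, hS, hwS, rfl⟩
            rcases hdescr S hS with rfl | rfl
            · simp only [Finset.sum_empty] at hwS
              exact absurd (hwS.trans hkw) hw0.ne
            · simp
          · rintro rfl
            exact ⟨{0}, by simp [hkw]⟩
        rw [this, sSup_singleton]
      · rw [if_neg hkw]
        have : {b : EReal | ∃ S : Finset ℕ, S ⊆ Finset.range 1 ∧
            (∑ j ∈ S, w j) = k ∧ b = ((pwtB n d p w c vmax ν R S : ℝ) : EReal)}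
            = (∅ : Set EReal) := by
          ext b
          simp only [Set.mem_setOf_eq, Set.mem_empty_iff_false, iff_false]
          rintro ⟨S, hS, hwS, rfl⟩
          rcases hdescr S hS with rfl | rfl
          · simp only [Finset.sum_empty] at hwS; exact hk0 hwS.symm
          · simp only [Finset.sum_singleton] at hwS; exact hkw hwS.symm
        rw [this, sSup_empty]
  | succ t ih =>
    intro ht k
    have ht' : t < m := Nat.lt_of_succ_lt ht
    have hcn : c (t + 1) ≤ n := (hc (t + 1) ht).le
    set δ : ℝ := p (t + 1) - R * (∑ l ∈ Finset.Ico (c (t + 1)) n, d l) *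
        (1 / (vmax - ν * k) - 1 / (vmax - ν * (k - w (t + 1)))) with hδ
    rw [hstep t ht k, ih ht' k, ih ht' (k - w (t + 1))]
    set A : Set EReal := {b : EReal | ∃ S : Finset ℕ, S ⊆ Finset.range (t + 1) ∧
        (∑ j ∈ S, w j) = k ∧ b = ((pwtB n d p w c vmax ν R S : ℝ) : EReal)} with hA
    set A' : Set EReal := {b : EReal | ∃ S : Finset ℕ, S ⊆ Finset.range (t + 1) ∧
        (∑ j ∈ S, w j) = k - w (t + 1) ∧ b = ((pwtB n d p w c vmax ν R S : ℝ) : EReal)} with hA'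
    set BB : Set EReal := {b : EReal | ∃ S : Finset ℕ, S ⊆ Finset.range (t + 1 + 1) ∧
        (∑ j ∈ S, w j) = k ∧ b = ((pwtB n d p w c vmax ν R S : ℝ) : EReal)} with hBB
    -- key: for S' ⊆ range (t+1) with weight k - w(t+1),
    -- B (insert (t+1) S') = B S' + δ
    have hins : ∀ S' : Finset ℕ, S' ⊆ Finset.range (t + 1) →
        (∑ j ∈ S', w j) = k - w (t + 1) →
        (t + 1) ∉ S' ∧
        pwtB n d p w c vmax ν R (insert (t + 1) S') = pwtB n d p w c vmax ν R S' + δ := by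
      intro S' hS' hwS'
      have hnm : (t + 1) ∉ S' := fun h => by
        have := Finset.mem_range.1 (hS' h); omega
      refine ⟨hnm, ?_⟩
      have hmaxc : ∀ j ∈ S', c j ≤ c (t + 1) := fun j hj =>
        hmono (Finset.mem_range.1 (hS' hj)).le
      have hKk : (∑ j ∈ insert (t + 1) S', w j) = k := by
        rw [Finset.sum_insert hnm, hwS']; ring
      rw [pwtB_insert n d p w c vmax ν R (t + 1) S' hnm hmaxc hcn, hKk, hδ]
    refine le_antisymm (max_le ?_ ?_) (sSup_le ?_)
    · refine sSup_le_sSup ?_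
      rintro b ⟨S, hS, hwS, rfl⟩
      exact ⟨S, hS.trans (Finset.range_subset_range.2 (by omega)), hwS, rfl⟩
    · rw [← EReal.le_sub_iff_add_le (Or.inl (EReal.coe_ne_bot δ)) (Or.inl (EReal.coe_ne_top δ))]
      refine sSup_le ?_
      rintro b ⟨S', hS', hwS', rfl⟩
      rw [EReal.le_sub_iff_add_le (Or.inl (EReal.coe_ne_bot δ)) (Or.inl (EReal.coe_ne_top δ))]
      obtain ⟨hnm, heq⟩ := hins S' hS' hwS'
      refine le_sSup ⟨insert (t + 1) S', ?_, ?_, ?_⟩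
      · exact Finset.insert_subset (Finset.mem_range.2 (by omega))
          (hS'.trans (Finset.range_subset_range.2 (by omega)))
      · rw [Finset.sum_insert hnm, hwS']; ring
      · rw [heq, EReal.coe_add]
    · rintro b ⟨S, hS, hwS, rfl⟩
      by_cases hmem : (t + 1) ∈ S
      · set S' := S.erase (t + 1) with hS'def
        have hS' : S' ⊆ Finset.range (t + 1) := by
          intro j hj
          have hj1 := Finset.mem_of_mem_erase hj
          have hj2 := Finset.ne_of_mem_erase hj
          have := Finset.mem_range.1 (hS hj1)
          exact Finset.mem_range.2 (by omega)
        have hwS' : (∑ j ∈ S', w j) = k - w (t + 1) := by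
          have := Finset.sum_erase_add S w hmem
          rw [← hwS]; rw [← this]; ring
        obtain ⟨hnm, heq⟩ := hins S' hS' hwS'
        rw [Finset.insert_erase hmem] at heq
        refine le_trans ?_ (le_max_right _ _)
        rw [heq, EReal.coe_add]
        have hmem' : ((pwtB n d p w c vmax ν R S' : ℝ) : EReal) ∈ A' := ⟨S', hS', hwS', rfl⟩
        exact add_le_add_left (le_sSup hmem') _
      · have hsub : S ⊆ Finset.range (t + 1) := by
          intro j hj
          have h1 := Finset.mem_range.1 (hS hj)
          have h2 : j ≠ t + 1 := fun h => hmem (h ▸ hj)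
          exact Finset.mem_range.2 (by omega)
        have hmemA : ((pwtB n d p w c vmax ν R S : ℝ) : EReal) ∈ A := ⟨S, hsub, hwS, rfl⟩
        exact le_trans (le_sSup hmemA) (le_max_left _ _)
end

section
/- In the dynamic programming recursion for PWT, when item e_{ij} is added to a partial solution of weight k - w_{ij}, the change in total benefit equals p_{ij} - R·d_{in}·(1/(v_max - ν k) - 1/(v_max - ν(k - w_{ij}))); i.e., the incremental cost of adding e_{ij} depends only on the item's profit, its weight, the previous total weight, and the remaining distance d_{in}. -/
/-- Incremental benefit in the DP recursion: adding item `j` (located at city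
`c j`) to a partial solution `S` of items located no later than `c j`, of total
weight `k - w j`, changes the total benefit by exactly
`p j - R·d_in·(1/(v_max - νk) - 1/(v_max - ν(k - w j)))`, where
`d_in = ∑_{l = c j}^{n-1} d l`; i.e. the incremental cost depends only on the
item's profit, its weight, the previous total weight and the remaining distance. -/
theorem pwt_incremental_benefit (n : ℕ) (d p w : ℕ → ℝ) (c : ℕ → ℕ)
    (vmax ν R : ℝ) (S : Finset ℕ) (j : ℕ) (hj : j ∉ S)
    (horder : ∀ a ∈ S, c a ≤ c j) (k : ℝ) (hk : (∑ a ∈ S, w a) = k - w j) :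
    pwtB n d p w c vmax ν R (insert j S) - pwtB n d p w c vmax ν R S =
      p j - R * (∑ l ∈ Finset.Ico (c j) n, d l) *
        (1 / (vmax - ν * k) - 1 / (vmax - ν * (k - w j))) := by
  classical
  have hload1 : ∀ i, i < c j → pwtLoad w c (insert j S) i = pwtLoad w c S i := by
    intro i hi
    unfold pwtLoad
    rw [Finset.filter_insert, if_neg (by omega)]
  have hload2 : ∀ i, c j ≤ i →
      pwtLoad w c (insert j S) i = k ∧ pwtLoad w c S i = k - w j := by
    intro i hi
    have hall : S.filter (fun a => c a ≤ i) = S :=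
      Finset.filter_true_of_mem (fun a ha => le_trans (horder a ha) hi)
    refine ⟨?_, ?_⟩
    · unfold pwtLoad
      rw [Finset.filter_insert, if_pos hi,
        Finset.sum_insert (by simp [hj]), hall, hk]
      ring
    · unfold pwtLoad
      rw [hall, hk]
  unfold pwtB pwtT
  rw [Finset.sum_insert hj]
  have key : (∑ i ∈ Finset.range n, d i / (vmax - ν * pwtLoad w c (insert j S) i))
      - (∑ i ∈ Finset.range n, d i / (vmax - ν * pwtLoad w c S i))
      = (∑ l ∈ Finset.Ico (c j) n, d l) *
        (1 / (vmax - ν * k) - 1 / (vmax - ν * (k - w j))) := by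
    rw [← Finset.sum_sub_distrib, Finset.sum_mul]
    rw [show Finset.Ico (c j) n = (Finset.range n).filter (fun i => c j ≤ i) by
      ext i; simp [Finset.mem_Ico, and_comm]]
    rw [Finset.sum_filter]
    apply Finset.sum_congr rfl
    intro i _
    by_cases hi : c j ≤ i
    · obtain ⟨h1, h2⟩ := hload2 i hi
      rw [h1, h2, if_pos hi]
      ring
    · rw [hload1 i (by omega), if_neg hi, sub_self]
  linear_combination (-R) * key
end

section
/- Removing dominated entries preserves optimality: if for weights k' < k we have β(i,j,k') ≥ β(i,j,k), then for every extension of a solution of weight k by items e_{ab} ≻ e_{ij}, the same extension applied to the solution of weight k' yields benefit at least as large. Hence deleting dominated entries from the DP table does not change the optimal value computed in the final column. -/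
lemma pwtLoad_union (w : ℕ → ℝ) (c : ℕ → ℕ) {S E : Finset ℕ} (h : Disjoint S E) (i : ℕ) :
    pwtLoad w c (S ∪ E) i = pwtLoad w c S i + pwtLoad w c E i := by
  unfold pwtLoad
  rw [Finset.filter_union,
    Finset.sum_union (h.mono (Finset.filter_subset _ _) (Finset.filter_subset _ _))]

lemma pwt_key (dv LE L L' vmax ν : ℝ) (hdv : 0 ≤ dv) (hLE : 0 ≤ LE) (hν : 0 ≤ ν)
    (hL : L' ≤ L) (hcap : ν * (L + LE) < vmax) :
    dv / (vmax - ν * (L' + LE)) - dv / (vmax - ν * L') ≤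
      dv / (vmax - ν * (L + LE)) - dv / (vmax - ν * L) := by
  have hA : 0 < vmax - ν * (L + LE) := by linarith
  have hB : 0 < vmax - ν * L := by nlinarith
  have hA' : 0 < vmax - ν * (L' + LE) := by nlinarith
  have hB' : 0 < vmax - ν * L' := by nlinarith
  have e1 : dv / (vmax - ν * (L + LE)) - dv / (vmax - ν * L)
      = dv * (ν * LE) / ((vmax - ν * (L + LE)) * (vmax - ν * L)) := by
    field_simp
    ring
  have e2 : dv / (vmax - ν * (L' + LE)) - dv / (vmax - ν * L')
      = dv * (ν * LE) / ((vmax - ν * (L' + LE)) * (vmax - ν * L')) := by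
    field_simp
    ring
  rw [e1, e2]
  apply div_le_div_of_nonneg_left (by positivity) (by positivity)
  apply mul_le_mul (by nlinarith) (by nlinarith) hB.le hA'.le

/-- Removing dominated entries preserves optimality: if the solution `S'` has
smaller weight `k' < k` and at least the benefit of `S` (i.e. the entry of `S`
is dominated), then for every extension by a set `E` of later items (items whose
cities come no earlier than all items of `S ∪ S'`), extending `S'` yields
benefit at least as large as extending `S`.  Hence deleting dominated entries
from the DP table does not change the optimal value computed in the final
column. -/
theorem pwt_dominated_entries_removable (n : ℕ) (d p w : ℕ → ℝ) (c : ℕ → ℕ)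
    (vmax ν R : ℝ) (hd : ∀ i, 0 ≤ d i) (hw : ∀ j, 0 ≤ w j)
    (hR : 0 ≤ R) (hν : 0 ≤ ν)
    (S S' E : Finset ℕ) (hSE : Disjoint S E) (hS'E : Disjoint S' E)
    (horder : ∀ a ∈ S ∪ S', ∀ b ∈ E, c a ≤ c b)
    (hweight : (∑ j ∈ S', w j) < (∑ j ∈ S, w j))
    (hbenefit : pwtB n d p w c vmax ν R S ≤ pwtB n d p w c vmax ν R S')
    (hcap : ν * ((∑ j ∈ S, w j) + (∑ j ∈ E, w j)) < vmax) :
    pwtB n d p w c vmax ν R (S ∪ E) ≤ pwtB n d p w c vmax ν R (S' ∪ E) := by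
  have hT : pwtT n d w c vmax ν (S' ∪ E) - pwtT n d w c vmax ν S' ≤
      pwtT n d w c vmax ν (S ∪ E) - pwtT n d w c vmax ν S := by
    unfold pwtT
    rw [← Finset.sum_sub_distrib, ← Finset.sum_sub_distrib]
    apply Finset.sum_le_sum
    intro i _
    rw [pwtLoad_union w c hSE, pwtLoad_union w c hS'E]
    by_cases hE0 : pwtLoad w c E i = 0
    · rw [hE0, add_zero, add_zero, sub_self, sub_self]
    · -- some item of E with city ≤ i exists
      have hfil : (E.filter (fun j => c j ≤ i)).Nonempty := by
        by_contra h
        exact hE0 (by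
          unfold pwtLoad
          rw [Finset.not_nonempty_iff_eq_empty.mp h, Finset.sum_empty])
      obtain ⟨b, hb⟩ := hfil
      rw [Finset.mem_filter] at hb
      have hfull : ∀ (T : Finset ℕ), T ⊆ S ∪ S' → pwtLoad w c T i = ∑ j ∈ T, w j := by
        intro T hT
        unfold pwtLoad
        rw [Finset.filter_eq_self.mpr]
        intro a ha
        exact le_trans (horder a (hT ha) b hb.1) hb.2
      rw [hfull S Finset.subset_union_left, hfull S' Finset.subset_union_right]
      have hLEpos : 0 ≤ pwtLoad w c E i :=
        Finset.sum_nonneg (fun j _ => hw j)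
      have hLEle : pwtLoad w c E i ≤ ∑ j ∈ E, w j :=
        Finset.sum_le_sum_of_subset_of_nonneg (Finset.filter_subset _ _)
          (fun j _ _ => hw j)
      apply pwt_key _ _ _ _ _ _ (hd i) hLEpos hν hweight.le
      calc ν * ((∑ j ∈ S, w j) + pwtLoad w c E i)
          ≤ ν * ((∑ j ∈ S, w j) + ∑ j ∈ E, w j) := by
            apply mul_le_mul_of_nonneg_left (by linarith) hν
        _ < vmax := hcap
  unfold pwtB at *
  rw [Finset.sum_union hSE, Finset.sum_union hS'E]
  nlinarith [mul_le_mul_of_nonneg_left hT hR]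
end

section
/- Let x* be an optimal solution for the shifted PWT objective B' with OPT = B'(x*) > 0. Then ∑_{(i,j): x*_{ij}=1} (B(e_{ij}) - B(∅)) ≥ OPT, where B(e_{ij}) is the benefit of packing only item e_{ij}. Consequently, some selected item e_{ij} satisfies B(e_{ij}) - B(∅) ≥ OPT/m, where m is the total number of items. -/
/-- The shifted objective `B'(x) = B(x) - B(∅)` of a selection `S`. -/
noncomputable def pwtB' (n : ℕ) (d p w : ℕ → ℝ) (c : ℕ → ℕ) (vmax ν R : ℝ)
    (S : Finset ℕ) : ℝ :=
  pwtB n d p w c vmax ν R S - pwtB n d p w c vmax ν R ∅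

lemma pwt_step (vmax ν a s : ℝ) (hν : 0 ≤ ν) (hvmax : 0 < vmax) (ha : 0 ≤ a)
    (hs : 0 ≤ s) (h : ν * (s + a) < vmax) :
    1 / (vmax - ν * a) - 1 / vmax ≤ 1 / (vmax - ν * (s + a)) - 1 / (vmax - ν * s) := by
  have hνa : 0 ≤ ν * a := mul_nonneg hν ha
  have hνs : 0 ≤ ν * s := mul_nonneg hν hs
  have h1 : 0 < vmax - ν * (s + a) := by linarith
  have h2 : 0 < vmax - ν * s := by nlinarith
  have h3 : 0 < vmax - ν * a := by nlinarith
  rw [div_sub_div _ _ h3.ne' hvmax.ne', div_sub_div _ _ h1.ne' h2.ne']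
  rw [div_le_div_iff₀ (by positivity) (by positivity)]
  nlinarith [mul_nonneg (mul_nonneg hνa hνs) h1.le, mul_nonneg hνa hνs,
    mul_nonneg (mul_nonneg hνa hνs) hvmax.le]

lemma pwt_super (vmax ν : ℝ) (w : ℕ → ℝ) (hν : 0 ≤ ν) (hvmax : 0 < vmax)
    (hw : ∀ j, 0 ≤ w j) (G : Finset ℕ) (hcap : ν * ∑ j ∈ G, w j < vmax)
    (F : Finset ℕ) (hFG : F ⊆ G) :
    ∑ j ∈ F, (1 / (vmax - ν * w j) - 1 / vmax)
      ≤ 1 / (vmax - ν * ∑ j ∈ F, w j) - 1 / vmax := by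
  classical
  induction F using Finset.induction_on with
  | empty => simp
  | @insert j F hj ih =>
    have hjG : j ∈ G := hFG (Finset.mem_insert_self j F)
    have hFsub : F ⊆ G := fun x hx => hFG (Finset.mem_insert_of_mem hx)
    have hs : 0 ≤ ∑ k ∈ F, w k := Finset.sum_nonneg fun k _ => hw k
    have hsum_le : ∑ k ∈ insert j F, w k ≤ ∑ k ∈ G, w k :=
      Finset.sum_le_sum_of_subset_of_nonneg hFG (fun k _ _ => hw k)
    have hlt : ν * (∑ k ∈ F, w k + w j) < vmax := by
      have : ν * ∑ k ∈ insert j F, w k ≤ ν * ∑ k ∈ G, w k :=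
        mul_le_mul_of_nonneg_left hsum_le hν
      rw [Finset.sum_insert hj] at this
      linarith [this, hcap]
    rw [Finset.sum_insert hj, Finset.sum_insert hj]
    have hstep := pwt_step vmax ν (w j) (∑ k ∈ F, w k) hν hvmax (hw j) hs hlt
    have := ih hFsub
    calc (1 / (vmax - ν * w j) - 1 / vmax) + ∑ k ∈ F, (1 / (vmax - ν * w k) - 1 / vmax)
        ≤ (1 / (vmax - ν * w j) - 1 / vmax) + (1 / (vmax - ν * ∑ k ∈ F, w k) - 1 / vmax) := by
          linarith
      _ ≤ 1 / (vmax - ν * (∑ k ∈ F, w k + w j)) - 1 / vmax := by linarith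
      _ = 1 / (vmax - ν * (w j + ∑ k ∈ F, w k)) - 1 / vmax := by ring_nf

/-- If `x*` is an optimal solution for the shifted objective `B'` with
`OPT = B'(x*) > 0`, then `∑_{j ∈ x*} B'(e_j) ≥ OPT` (superadditivity of the
single-item gains), and consequently some selected item `e_j` satisfies
`B'(e_j) = B(e_j) - B(∅) ≥ OPT/m`. -/
theorem pwt_best_single_item_bound (n m : ℕ) (hm : 0 < m)
    (d p w : ℕ → ℝ) (c : ℕ → ℕ) (vmax ν R : ℝ)
    (hd : ∀ i, 0 ≤ d i) (hw : ∀ j, 0 ≤ w j) (hR : 0 ≤ R) (hν : 0 ≤ ν)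
    (hvmax : 0 < vmax) (hcap : ν * (∑ j ∈ Finset.range m, w j) < vmax)
    (Sstar : Finset ℕ) (hSsub : Sstar ⊆ Finset.range m)
    (hopt : ∀ S ⊆ Finset.range m,
      pwtB' n d p w c vmax ν R S ≤ pwtB' n d p w c vmax ν R Sstar)
    (hOPT : 0 < pwtB' n d p w c vmax ν R Sstar) :
    pwtB' n d p w c vmax ν R Sstar ≤ (∑ j ∈ Sstar, pwtB' n d p w c vmax ν R {j}) ∧
    ∃ j ∈ Sstar, pwtB' n d p w c vmax ν R Sstar / m ≤ pwtB' n d p w c vmax ν R {j} := by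
  classical
  have hT : ∀ S : Finset ℕ, pwtT n d w c vmax ν S - pwtT n d w c vmax ν ∅
      = ∑ i ∈ Finset.range n, (d i / (vmax - ν * pwtLoad w c S i) - d i / vmax) := by
    intro S
    simp [pwtT, pwtLoad, Finset.sum_sub_distrib]
  have hload1 : ∀ j i, pwtLoad w c ({j} : Finset ℕ) i = if c j ≤ i then w j else 0 := by
    intro j i
    simp only [pwtLoad, Finset.filter_singleton]
    split <;> simp
  -- key superadditivity inequality on travel times
  have key : ∑ j ∈ Sstar, (pwtT n d w c vmax ν {j} - pwtT n d w c vmax ν ∅)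
      ≤ pwtT n d w c vmax ν Sstar - pwtT n d w c vmax ν ∅ := by
    rw [hT Sstar]
    calc ∑ j ∈ Sstar, (pwtT n d w c vmax ν {j} - pwtT n d w c vmax ν ∅)
        = ∑ j ∈ Sstar, ∑ i ∈ Finset.range n,
            (d i / (vmax - ν * pwtLoad w c {j} i) - d i / vmax) :=
          Finset.sum_congr rfl fun j _ => hT {j}
      _ = ∑ i ∈ Finset.range n, ∑ j ∈ Sstar,
            (d i / (vmax - ν * pwtLoad w c {j} i) - d i / vmax) := Finset.sum_comm
      _ ≤ ∑ i ∈ Finset.range n, (d i / (vmax - ν * pwtLoad w c Sstar i) - d i / vmax) := by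
          apply Finset.sum_le_sum
          intro i _
          have hsplit := Finset.sum_filter_add_sum_filter_not Sstar (fun j => c j ≤ i)
            (fun j => d i / (vmax - ν * pwtLoad w c {j} i) - d i / vmax)
          rw [← hsplit]
          have hzero : ∑ j ∈ Sstar.filter (fun j => ¬ c j ≤ i),
              (d i / (vmax - ν * pwtLoad w c {j} i) - d i / vmax) = 0 := by
            apply Finset.sum_eq_zero
            intro j hj
            have : ¬ c j ≤ i := (Finset.mem_filter.mp hj).2
            rw [hload1, if_neg this]
            simp
          rw [hzero, add_zero]
          have hFsub : Sstar.filter (fun j => c j ≤ i) ⊆ Finset.range m :=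
            (Finset.filter_subset _ _).trans hSsub
          have hsuper := pwt_super vmax ν w hν hvmax hw (Finset.range m) hcap
            (Sstar.filter (fun j => c j ≤ i)) hFsub
          have hrw : ∑ j ∈ Sstar.filter (fun j => c j ≤ i),
              (d i / (vmax - ν * pwtLoad w c {j} i) - d i / vmax)
              = d i * ∑ j ∈ Sstar.filter (fun j => c j ≤ i),
                  (1 / (vmax - ν * w j) - 1 / vmax) := by
            rw [Finset.mul_sum]
            apply Finset.sum_congr rfl
            intro j hj
            rw [hload1, if_pos (Finset.mem_filter.mp hj).2]
            ring
          rw [hrw]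
          have hloadS : pwtLoad w c Sstar i = ∑ j ∈ Sstar.filter (fun j => c j ≤ i), w j := rfl
          rw [hloadS]
          calc d i * ∑ j ∈ Sstar.filter (fun j => c j ≤ i), (1 / (vmax - ν * w j) - 1 / vmax)
              ≤ d i * (1 / (vmax - ν * ∑ j ∈ Sstar.filter (fun j => c j ≤ i), w j) - 1 / vmax) :=
                mul_le_mul_of_nonneg_left hsuper (hd i)
            _ = d i / (vmax - ν * ∑ j ∈ Sstar.filter (fun j => c j ≤ i), w j) - d i / vmax := by
                ring
  -- rewrite B' in terms of travel-time differences
  have hB' : ∀ S : Finset ℕ, pwtB' n d p w c vmax ν R S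
      = (∑ j ∈ S, p j) - R * (pwtT n d w c vmax ν S - pwtT n d w c vmax ν ∅) := by
    intro S
    simp only [pwtB', pwtB, Finset.sum_empty]
    ring
  have part1 : pwtB' n d p w c vmax ν R Sstar
      ≤ ∑ j ∈ Sstar, pwtB' n d p w c vmax ν R {j} := by
    have hsum : ∑ j ∈ Sstar, pwtB' n d p w c vmax ν R {j}
        = (∑ j ∈ Sstar, p j)
          - R * ∑ j ∈ Sstar, (pwtT n d w c vmax ν {j} - pwtT n d w c vmax ν ∅) := by
      rw [Finset.mul_sum, ← Finset.sum_sub_distrib]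
      apply Finset.sum_congr rfl
      intro j _
      rw [hB' {j}]
      simp
    rw [hB' Sstar, hsum]
    have := mul_le_mul_of_nonneg_left key hR
    linarith
  refine ⟨part1, ?_⟩
  have hne : Sstar.Nonempty := by
    rcases Finset.eq_empty_or_nonempty Sstar with h | h
    · exfalso
      rw [h] at hOPT
      simp [pwtB'] at hOPT
    · exact h
  apply Finset.exists_le_of_sum_le hne
  have hcard : (Sstar.card : ℝ) ≤ m := by
    have := Finset.card_le_card hSsub
    rw [Finset.card_range] at this
    exact_mod_cast this
  calc ∑ _j ∈ Sstar, pwtB' n d p w c vmax ν R Sstar / m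
      = Sstar.card * (pwtB' n d p w c vmax ν R Sstar / m) := by
        rw [Finset.sum_const, nsmul_eq_mul]
    _ ≤ m * (pwtB' n d p w c vmax ν R Sstar / m) := by
        apply mul_le_mul_of_nonneg_right hcard (by positivity)
    _ = pwtB' n d p w c vmax ν R Sstar := by
        field_simp
    _ ≤ ∑ j ∈ Sstar, pwtB' n d p w c vmax ν R {j} := part1
end
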